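/- For every integer p ≥ 1 and every z ∈ [0,1], the B-spline basis supplemented for the periodic boundary condition forms a partition of unity: ∑_{n=0}^{l−p−1} b_n^p(z) + ∑_{n=−p}^{−1} b̃_n^p(z) = 1. -/

import Mathlib

/-- Uniform knots `z_j = j · Δz`. -/
noncomputable def knot (Δz : ℝ) (j : ℤ) : ℝ := j * Δz

/-- B-spline basis functions `b_n^p` on uniform knots, defined by the
Cox–de Boor recursion. -/
noncomputable def bspline (Δz : ℝ) : ℕ → ℤ → ℝ → ℝ
  | 0, n, z => if knot Δz n ≤ z ∧ z < knot Δz (n + 1) then 1 else 0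
  | p + 1, n, z =>
      ((z - knot Δz n) / (knot Δz (n + (p : ℤ) + 1) - knot Δz n)) * bspline Δz p n z +
      ((knot Δz (n + (p : ℤ) + 2) - z) / (knot Δz (n + (p : ℤ) + 2) - knot Δz (n + 1))) *
        bspline Δz p (n + 1) z
/-- Supplementary B-spline basis functions for the periodic boundary condition
on `[0,1]` with `Δz = 1/l`, for `n = -p, …, -1`. -/
noncomputable def bsplinePer (l p : ℕ) (n : ℤ) (z : ℝ) : ℝ :=
  if 0 ≤ z ∧ z < ((n : ℝ) + (p : ℝ) + 1) * (1 / (l : ℝ)) then bspline (1 / (l : ℝ)) p n z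
  else if 1 + (n : ℝ) * (1 / (l : ℝ)) ≤ z ∧ z ≤ 1 then bspline (1 / (l : ℝ)) p n (z - 1)
  else 0

lemma knot_mono {Δz : ℝ} (hΔ : 0 ≤ Δz) {i j : ℤ} (h : i ≤ j) :
    knot Δz i ≤ knot Δz j :=
  mul_le_mul_of_nonneg_right (by exact_mod_cast h) hΔ

lemma knot_strict_mono {Δz : ℝ} (hΔ : 0 < Δz) {i j : ℤ} (h : i < j) :
    knot Δz i < knot Δz j :=
  mul_lt_mul_of_pos_right (by exact_mod_cast h) hΔ

lemma knot_add (Δz : ℝ) (j m : ℤ) : knot Δz (j + m) = knot Δz j + (m : ℝ) * Δz := by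
  unfold knot; push_cast; ring

lemma bspline_zero_left (Δz : ℝ) (hΔ : 0 ≤ Δz) (p : ℕ) :
    ∀ (n : ℤ) (z : ℝ), z < knot Δz n → bspline Δz p n z = 0 := by
  induction p with
  | zero =>
    intro n z h
    simp only [bspline]
    rw [if_neg]
    push_neg
    intro h'
    linarith
  | succ p ih =>
    intro n z h
    have h1 : z < knot Δz (n + 1) := lt_of_lt_of_le h (knot_mono hΔ (by omega))
    simp only [bspline, ih n z h, ih (n + 1) z h1, mul_zero, add_zero]

lemma bspline_zero_right (Δz : ℝ) (hΔ : 0 ≤ Δz) (p : ℕ) :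
    ∀ (n : ℤ) (z : ℝ), knot Δz (n + (p : ℤ) + 1) ≤ z → bspline Δz p n z = 0 := by
  induction p with
  | zero =>
    intro n z h
    simp only [Nat.cast_zero, add_zero] at h
    simp only [bspline]
    rw [if_neg]
    push_neg
    intro h'
    linarith
  | succ p ih =>
    intro n z h
    push_cast at h
    have h1 : knot Δz (n + (p : ℤ) + 1) ≤ z :=
      le_trans (knot_mono hΔ (by omega)) h
    have h2 : knot Δz ((n + 1) + (p : ℤ) + 1) ≤ z :=
      le_trans (knot_mono hΔ (by omega)) h
    simp only [bspline, ih n z h1, ih (n + 1) z h2, mul_zero, add_zero]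

lemma bspline_knot_self (Δz : ℝ) (hΔ : 0 < Δz) (p : ℕ) (n : ℤ) :
    bspline Δz (p + 1) n (knot Δz n) = 0 := by
  have h : knot Δz n < knot Δz (n + 1) := knot_strict_mono hΔ (by omega)
  simp only [bspline, sub_self, zero_div, zero_mul, zero_add,
    bspline_zero_left Δz hΔ.le p (n + 1) (knot Δz n) h, mul_zero]

lemma bspline_shift (Δz : ℝ) (p : ℕ) (m : ℤ) :
    ∀ (n : ℤ) (z : ℝ), bspline Δz p (n + m) z = bspline Δz p n (z - (m : ℝ) * Δz) := by
  induction p with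
  | zero =>
    intro n z
    simp only [bspline]
    have e3 : n + m + 1 = (n + 1) + m := by ring
    rw [e3, knot_add, knot_add]
    have hiff : (knot Δz n + (m : ℝ) * Δz ≤ z ∧ z < knot Δz (n + 1) + (m : ℝ) * Δz) ↔
        (knot Δz n ≤ z - (m : ℝ) * Δz ∧ z - (m : ℝ) * Δz < knot Δz (n + 1)) := by
      constructor <;> rintro ⟨h1, h2⟩ <;> exact ⟨by linarith, by linarith⟩
    simp only [hiff]
  | succ p ih =>
    intro n z
    simp only [bspline]
    have e3 : n + m + 1 = (n + 1) + m := by ring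
    rw [e3, ih n z, ih (n + 1) z]
    unfold knot
    push_cast
    ring

lemma bspline_partition (Δz : ℝ) (hΔ : 0 < Δz) (p : ℕ) :
    ∀ (k : ℤ) (z : ℝ), knot Δz k ≤ z → z < knot Δz (k + 1) →
      ∑ n ∈ Finset.Icc (k - (p : ℤ)) k, bspline Δz p n z = 1 := by
  induction p with
  | zero =>
    intro k z h1 h2
    simp only [Nat.cast_zero, sub_zero, Finset.Icc_self, Finset.sum_singleton, bspline]
    exact if_pos ⟨h1, h2⟩
  | succ p ih =>
    intro k z h1 h2
    have hd : ((p : ℝ) + 1) * Δz ≠ 0 := by positivity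
    set a : ℤ := k - ((p : ℤ) + 1) with ha
    have hset : Finset.Icc (k - ((p + 1 : ℕ) : ℤ)) k = Finset.Icc a k := by
      congr 1 <;> omega
    have expand : ∀ n : ℤ, bspline Δz (p + 1) n z =
        (z - knot Δz n) / (((p : ℝ) + 1) * Δz) * bspline Δz p n z +
        (1 - (z - knot Δz (n + 1)) / (((p : ℝ) + 1) * Δz)) * bspline Δz p (n + 1) z := by
      intro n
      simp only [bspline]
      have d1 : knot Δz (n + (p : ℤ) + 1) - knot Δz n = ((p : ℝ) + 1) * Δz := by
        unfold knot; push_cast; ring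
      have d2 : knot Δz (n + (p : ℤ) + 2) - knot Δz (n + 1) = ((p : ℝ) + 1) * Δz := by
        unfold knot; push_cast; ring
      have d3 : knot Δz (n + (p : ℤ) + 2) - z = ((p : ℝ) + 1) * Δz - (z - knot Δz (n + 1)) := by
        unfold knot; push_cast; ring
      have d4 : (((p : ℝ) + 1) * Δz - (z - knot Δz (n + 1))) / (((p : ℝ) + 1) * Δz)
          = 1 - (z - knot Δz (n + 1)) / (((p : ℝ) + 1) * Δz) := by
        rw [sub_div, div_self hd]
      rw [d1, d3, d2, d4]
    rw [hset, Finset.sum_congr rfl (fun n _ => expand n), Finset.sum_add_distrib]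
    have reidx : ∑ n ∈ Finset.Icc a k,
        (1 - (z - knot Δz (n + 1)) / (((p : ℝ) + 1) * Δz)) * bspline Δz p (n + 1) z
        = ∑ n ∈ Finset.Icc (a + 1) (k + 1),
        (1 - (z - knot Δz n) / (((p : ℝ) + 1) * Δz)) * bspline Δz p n z := by
      have hmap : Finset.Icc (a + 1) (k + 1)
          = (Finset.Icc a k).map (addRightEmbedding (1 : ℤ)) := by
        ext x
        simp only [Finset.mem_Icc, Finset.mem_map, addRightEmbedding_apply]
        constructor
        · intro hx; exact ⟨x - 1, by omega, by omega⟩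
        · rintro ⟨y, hy, rfl⟩; omega
      rw [hmap, Finset.sum_map]
      simp only [addRightEmbedding_apply]
    rw [reidx]
    have hsplit1 : Finset.Icc a k = insert a (Finset.Icc (a + 1) k) := by
      ext x; simp only [Finset.mem_Icc, Finset.mem_insert]; omega
    have hsplit2 : Finset.Icc (a + 1) (k + 1) = insert (k + 1) (Finset.Icc (a + 1) k) := by
      ext x; simp only [Finset.mem_Icc, Finset.mem_insert]; omega
    have hna : a ∉ Finset.Icc (a + 1) k := by simp only [Finset.mem_Icc]; omega
    have hnk : (k + 1) ∉ Finset.Icc (a + 1) k := by simp only [Finset.mem_Icc]; omega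
    rw [hsplit1, Finset.sum_insert hna, hsplit2, Finset.sum_insert hnk]
    have hba : bspline Δz p a z = 0 := by
      apply bspline_zero_right Δz hΔ.le p a z
      have : a + (p : ℤ) + 1 = k := by omega
      rw [this]; exact h1
    have hbk : bspline Δz p (k + 1) z = 0 :=
      bspline_zero_left Δz hΔ.le p (k + 1) z h2
    rw [hba, hbk, mul_zero, mul_zero, zero_add, zero_add, ← Finset.sum_add_distrib]
    have combine : ∀ n ∈ Finset.Icc (a + 1) k,
        (z - knot Δz n) / (((p : ℝ) + 1) * Δz) * bspline Δz p n z +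
        (1 - (z - knot Δz n) / (((p : ℝ) + 1) * Δz)) * bspline Δz p n z
        = bspline Δz p n z := fun n _ => by ring
    rw [Finset.sum_congr rfl combine]
    have : Finset.Icc (a + 1) k = Finset.Icc (k - (p : ℤ)) k := by congr 1; omega
    rw [this]
    exact ih k z h1 h2

lemma bspline_sum_eq_one (Δz : ℝ) (hΔ : 0 < Δz) (p : ℕ) (A B k : ℤ) (z : ℝ)
    (h1 : knot Δz k ≤ z) (h2 : z < knot Δz (k + 1)) (hA : A ≤ k - (p : ℤ)) (hB : k ≤ B) :
    ∑ n ∈ Finset.Icc A B, bspline Δz p n z = 1 := by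
  rw [← bspline_partition Δz hΔ p k z h1 h2]
  symm
  apply Finset.sum_subset
  · intro n hn
    simp only [Finset.mem_Icc] at *
    omega
  · intro n hn hn'
    simp only [Finset.mem_Icc] at hn hn'
    rcases lt_or_ge n (k - (p : ℤ)) with hlt | hge
    · apply bspline_zero_right Δz hΔ.le p n z
      exact le_trans (knot_mono hΔ.le (by omega)) h1
    · have hk : k + 1 ≤ n := by omega
      exact bspline_zero_left Δz hΔ.le p n z (lt_of_lt_of_le h2 (knot_mono hΔ.le hk))

lemma bspline_sum_all (l p : ℕ) (hp : 1 ≤ p) (hl : p < l) (z : ℝ)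
    (hz0 : 0 ≤ z) (hz1 : z ≤ 1) :
    ∑ n ∈ Finset.Icc (-(p : ℤ)) ((l : ℤ) - 1), bspline (1 / (l : ℝ)) p n z = 1 := by
  have hl0 : (0 : ℝ) < (l : ℝ) := by
    have : 0 < l := by omega
    exact_mod_cast this
  have hΔ : 0 < 1 / (l : ℝ) := by positivity
  rcases lt_or_eq_of_le hz1 with h | h
  · set k : ℤ := ⌊z * l⌋ with hk
    have hfl : (k : ℝ) ≤ z * l := Int.floor_le _
    have hfl2 : z * l < (k : ℝ) + 1 := Int.lt_floor_add_one _
    have hk0 : 0 ≤ k := Int.le_floor.2 (by exact_mod_cast mul_nonneg hz0 hl0.le)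
    have hkl : k ≤ (l : ℤ) - 1 := by
      have hzl : z * l < (l : ℝ) := by nlinarith
      have hlt : k < (l : ℤ) := Int.floor_lt.2 (by exact_mod_cast hzl)
      omega
    have h1 : knot (1 / (l : ℝ)) k ≤ z := by
      unfold knot
      rw [mul_one_div, div_le_iff₀ hl0]
      exact hfl
    have h2 : z < knot (1 / (l : ℝ)) (k + 1) := by
      unfold knot
      push_cast
      rw [mul_one_div, lt_div_iff₀ hl0]
      exact hfl2
    exact bspline_sum_eq_one _ hΔ p _ _ k z h1 h2 (by omega) (by omega)
  · subst h
    have h1 : knot (1 / (l : ℝ)) (l : ℤ) = (1 : ℝ) := by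
      unfold knot
      push_cast
      field_simp
    have h2 : (1 : ℝ) < knot (1 / (l : ℝ)) ((l : ℤ) + 1) := by
      unfold knot
      push_cast
      rw [mul_one_div, lt_div_iff₀ hl0]
      linarith
    have big : ∑ n ∈ Finset.Icc (-(p : ℤ)) (l : ℤ), bspline (1 / (l : ℝ)) p n 1 = 1 :=
      bspline_sum_eq_one _ hΔ p _ _ (l : ℤ) 1 h1.le h2 (by omega) le_rfl
    have hsplit : Finset.Icc (-(p : ℤ)) (l : ℤ)
        = insert (l : ℤ) (Finset.Icc (-(p : ℤ)) ((l : ℤ) - 1)) := by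
      ext x; simp only [Finset.mem_Icc, Finset.mem_insert]; omega
    have hnm : (l : ℤ) ∉ Finset.Icc (-(p : ℤ)) ((l : ℤ) - 1) := by
      simp only [Finset.mem_Icc]; omega
    rw [hsplit, Finset.sum_insert hnm] at big
    have hbl : bspline (1 / (l : ℝ)) p (l : ℤ) 1 = 0 := by
      obtain ⟨q, rfl⟩ := Nat.exists_eq_succ_of_ne_zero (by omega : p ≠ 0)
      have := bspline_knot_self (1 / (l : ℝ)) hΔ q (l : ℤ)
      rwa [h1] at this
    rw [hbl, zero_add] at big
    exact big

lemma bsplinePer_eq (l p : ℕ) (hp : 1 ≤ p) (hl : p < l) (n : ℤ)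
    (hn1 : -(p : ℤ) ≤ n) (hn2 : n ≤ -1) (z : ℝ) (hz0 : 0 ≤ z) (hz1 : z ≤ 1) :
    bsplinePer l p n z
      = bspline (1 / (l : ℝ)) p n z + bspline (1 / (l : ℝ)) p (n + l) z := by
  have hl0 : (0 : ℝ) < (l : ℝ) := by
    have : 0 < l := by omega
    exact_mod_cast this
  have hΔ : 0 < 1 / (l : ℝ) := by positivity
  have key1 : ((n : ℝ) + (p : ℝ) + 1) * (1 / (l : ℝ)) = knot (1 / (l : ℝ)) (n + p + 1) := by
    unfold knot; push_cast; ring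
  have key2 : 1 + (n : ℝ) * (1 / (l : ℝ)) = knot (1 / (l : ℝ)) (n + l) := by
    unfold knot; push_cast; field_simp; ring
  unfold bsplinePer
  split_ifs with hc1 hc2
  · -- z < (n+p+1)/l : the shifted copy vanishes
    have hz : bspline (1 / (l : ℝ)) p (n + l) z = 0 := by
      apply bspline_zero_left _ hΔ.le p (n + l) z
      calc z < knot (1 / (l : ℝ)) (n + p + 1) := key1 ▸ hc1.2
        _ ≤ knot (1 / (l : ℝ)) (n + l) := knot_mono hΔ.le (by omega)
    rw [hz, add_zero]
  · -- 1 + n/l ≤ z : the unshifted copy vanishes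
    have hsh : bspline (1 / (l : ℝ)) p n (z - 1) = bspline (1 / (l : ℝ)) p (n + l) z := by
      rw [bspline_shift (1 / (l : ℝ)) p (l : ℤ) n z]
      congr 1
      push_cast
      field_simp
    have hz : bspline (1 / (l : ℝ)) p n z = 0 := by
      apply bspline_zero_right _ hΔ.le p n z
      calc knot (1 / (l : ℝ)) (n + (p : ℤ) + 1)
          ≤ knot (1 / (l : ℝ)) (n + l) := knot_mono hΔ.le (by omega)
        _ ≤ z := key2 ▸ hc2.1
    rw [hsh, hz, zero_add]
  · -- both vanish
    push_neg at hc1 hc2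
    have hA : bspline (1 / (l : ℝ)) p n z = 0 := by
      apply bspline_zero_right _ hΔ.le p n z
      rw [← key1]
      exact hc1 hz0
    have hB : bspline (1 / (l : ℝ)) p (n + l) z = 0 := by
      apply bspline_zero_left _ hΔ.le p (n + l) z
      rw [← key2]
      by_contra h
      push_neg at h
      have := hc2 h
      linarith
    rw [hA, hB, add_zero]

/-- Partition of unity for the B-spline basis on `[0,1]` supplemented for the
periodic boundary condition. -/
theorem bspline_periodic_partition_of_unity (l p : ℕ) (hp : 1 ≤ p) (hl : p < l)
    (z : ℝ) (hz0 : 0 ≤ z) (hz1 : z ≤ 1) :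
    (∑ n ∈ Finset.Icc (0 : ℤ) ((l : ℤ) - (p : ℤ) - 1), bspline (1 / (l : ℝ)) p n z) +
      (∑ n ∈ Finset.Icc (-(p : ℤ)) (-1 : ℤ), bsplinePer l p n z) = 1 := by
  have hsum2 : ∑ n ∈ Finset.Icc (-(p : ℤ)) (-1 : ℤ), bsplinePer l p n z
      = ∑ n ∈ Finset.Icc (-(p : ℤ)) (-1 : ℤ),
        (bspline (1 / (l : ℝ)) p n z + bspline (1 / (l : ℝ)) p (n + l) z) :=
    Finset.sum_congr rfl fun n hn => by
      simp only [Finset.mem_Icc] at hn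
      exact bsplinePer_eq l p hp hl n hn.1 hn.2 z hz0 hz1
  rw [hsum2, Finset.sum_add_distrib]
  have reidx : ∑ n ∈ Finset.Icc (-(p : ℤ)) (-1 : ℤ), bspline (1 / (l : ℝ)) p (n + l) z
      = ∑ n ∈ Finset.Icc ((l : ℤ) - p) ((l : ℤ) - 1), bspline (1 / (l : ℝ)) p n z := by
    have hmap : Finset.Icc ((l : ℤ) - p) ((l : ℤ) - 1)
        = (Finset.Icc (-(p : ℤ)) (-1 : ℤ)).map (addRightEmbedding (l : ℤ)) := by
      ext x
      simp only [Finset.mem_Icc, Finset.mem_map, addRightEmbedding_apply]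
      constructor
      · intro hx; exact ⟨x - l, by omega, by omega⟩
      · rintro ⟨y, hy, rfl⟩; omega
    rw [hmap, Finset.sum_map]
    simp only [addRightEmbedding_apply]
  rw [reidx]
  have d1 : Disjoint (Finset.Icc (0 : ℤ) ((l : ℤ) - (p : ℤ) - 1))
      (Finset.Icc (-(p : ℤ)) (-1 : ℤ)) := by
    rw [Finset.disjoint_left]
    intro x hx hx'
    simp only [Finset.mem_Icc] at hx hx'
    omega
  have d2 : Disjoint (Finset.Icc (0 : ℤ) ((l : ℤ) - (p : ℤ) - 1) ∪ Finset.Icc (-(p : ℤ)) (-1 : ℤ))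
      (Finset.Icc ((l : ℤ) - p) ((l : ℤ) - 1)) := by
    rw [Finset.disjoint_left]
    intro x hx hx'
    simp only [Finset.mem_union, Finset.mem_Icc] at hx hx'
    omega
  have hun : (Finset.Icc (0 : ℤ) ((l : ℤ) - (p : ℤ) - 1) ∪ Finset.Icc (-(p : ℤ)) (-1 : ℤ))
      ∪ Finset.Icc ((l : ℤ) - p) ((l : ℤ) - 1) = Finset.Icc (-(p : ℤ)) ((l : ℤ) - 1) := by
    ext x
    simp only [Finset.mem_union, Finset.mem_Icc]
    omega
  have key := bspline_sum_all l p hp hl z hz0 hz1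
  rw [← hun, Finset.sum_union d2, Finset.sum_union d1] at key
  linarith
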